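/- For every k-uniform hypergraph H that is a proper sub-hypergraph of a connected k-uniform hypergraph G (on the vertex set of G, possibly after adding isolated vertices), ρ(𝒜(H)) < ρ(𝒜(G)), where 𝒜 denotes the adjacency tensor and ρ the tensor spectral radius. -/

import Mathlib

open Matrix

noncomputable def specRad {m : Type*} [Fintype m] [DecidableEq m]
    (M : Matrix m m ℝ) : ℝ :=
  sSup {r : ℝ | ∃ μ ∈ spectrum ℂ (M.map (Complex.ofReal)), r = ‖μ‖}

section Aux

variable {V : Type*} [Fintype V] [DecidableEq V] {M : Matrix V V ℝ}

omit [Fintype V] [DecidableEq V] in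
lemma star_eq_transpose_real (U : Matrix V V ℝ) : star U = Uᵀ := by
  ext i j; simp [conjTranspose_apply]

lemma specA {M : Matrix V V ℝ} (hM : M.IsHermitian) :
    spectrum ℂ (M.map Complex.ofReal) = Set.range (fun i => (hM.eigenvalues i : ℂ)) := by
  have hsp := hM.spectral_theorem
  set U : Matrix V V ℝ := (hM.eigenvectorUnitary : Matrix V V ℝ) with hU
  have hmapmul : ∀ A B : Matrix V V ℝ, (A * B).map Complex.ofReal
      = A.map Complex.ofReal * B.map Complex.ofReal := fun A B =>
    Matrix.map_mul (f := Complex.ofRealHom)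
  have hstar : (star U).map Complex.ofReal = star (U.map Complex.ofReal) := by
    ext i j
    simp [conjTranspose_apply]
  have hmem : U.map Complex.ofReal ∈ Matrix.unitaryGroup V ℂ := by
    constructor
    · rw [← hstar, ← hmapmul]
      have : star U * U = 1 := hM.eigenvectorUnitary.2.1
      rw [this]; simp
    · rw [← hstar, ← hmapmul]
      have : U * star U = 1 := hM.eigenvectorUnitary.2.2
      rw [this]; simp
  set u : (Matrix V V ℂ)ˣ := Unitary.toUnits ⟨U.map Complex.ofReal, hmem⟩ with hu
  have hMc : M.map Complex.ofReal
      = (u : Matrix V V ℂ) * diagonal (fun i => (hM.eigenvalues i : ℂ)) *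
        ((u⁻¹ : (Matrix V V ℂ)ˣ) : Matrix V V ℂ) := by
    have : ((diagonal (RCLike.ofReal ∘ hM.eigenvalues) : Matrix V V ℝ)).map Complex.ofReal
        = diagonal (fun i => (hM.eigenvalues i : ℂ)) := by
      rw [Matrix.diagonal_map (by simp)]
      rfl
    rw [hu]
    calc M.map Complex.ofReal
        = (U * diagonal (RCLike.ofReal ∘ hM.eigenvalues) * star U).map Complex.ofReal := by
          exact congrArg (fun X : Matrix V V ℝ => X.map Complex.ofReal) hsp
      _ = _ := by
          rw [hmapmul, hmapmul, this, hstar]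
          rfl
  rw [hMc, spectrum.units_conjugate, spectrum_diagonal]

lemma specRad_set_eq (hM : M.IsHermitian) :
    {r : ℝ | ∃ μ ∈ spectrum ℂ (M.map Complex.ofReal), r = ‖μ‖}
      = Set.range (fun i => |hM.eigenvalues i|) := by
  rw [specA hM]
  ext r
  constructor
  · rintro ⟨μ, ⟨i, rfl⟩, rfl⟩
    exact ⟨i, ((Complex.norm_real _).trans (Real.norm_eq_abs _)).symm⟩
  · rintro ⟨i, rfl⟩
    exact ⟨_, ⟨i, rfl⟩, ((Complex.norm_real _).trans (Real.norm_eq_abs _)).symm⟩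

lemma specRad_isGreatest [Nonempty V] (hM : M.IsHermitian) :
    IsGreatest (Set.range fun i => |hM.eigenvalues i|) (specRad M) := by
  have hgr : IsGreatest (Set.range fun i => |hM.eigenvalues i|)
      (Finset.univ.sup' Finset.univ_nonempty fun i => |hM.eigenvalues i|) := by
    constructor
    · obtain ⟨i0, hi0⟩ := Finset.exists_mem_eq_sup' (Finset.univ_nonempty (α := V))
        (fun i => |hM.eigenvalues i|)
      exact ⟨i0, hi0.2.symm⟩
    · rintro r ⟨i, rfl⟩
      exact Finset.le_sup' (f := fun i => |hM.eigenvalues i|) (Finset.mem_univ i)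
  have : specRad M = Finset.univ.sup' Finset.univ_nonempty fun i => |hM.eigenvalues i| := by
    rw [specRad, specRad_set_eq hM, hgr.csSup_eq]
  rw [this]
  exact hgr

lemma mulVec_decomp (hM : M.IsHermitian) (y : V → ℝ) :
    M *ᵥ y = (hM.eigenvectorUnitary : Matrix V V ℝ) *ᵥ
      (fun i => hM.eigenvalues i *
        ((star (hM.eigenvectorUnitary : Matrix V V ℝ) *ᵥ y) i)) := by
  set U : Matrix V V ℝ := (hM.eigenvectorUnitary : Matrix V V ℝ) with hU
  set c : V → ℝ := star U *ᵥ y with hc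
  have h1 : (fun i => hM.eigenvalues i * c i)
      = diagonal (RCLike.ofReal ∘ hM.eigenvalues) *ᵥ c := by
    funext i
    simp [mulVec_diagonal, RCLike.ofReal]
  rw [h1, mulVec_mulVec, mulVec_mulVec]
  exact congrArg (· *ᵥ y) hM.spectral_theorem

lemma unit_mulVec_star_mulVec (hM : M.IsHermitian) (y : V → ℝ) :
    (hM.eigenvectorUnitary : Matrix V V ℝ) *ᵥ
      (star (hM.eigenvectorUnitary : Matrix V V ℝ) *ᵥ y) = y := by
  rw [mulVec_mulVec, hM.eigenvectorUnitary.2.2, one_mulVec]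

lemma dot_decomp (hM : M.IsHermitian) (y : V → ℝ) :
    y ⬝ᵥ (M *ᵥ y) = ∑ i, hM.eigenvalues i *
      ((star (hM.eigenvectorUnitary : Matrix V V ℝ) *ᵥ y) i)^2 := by
  set U : Matrix V V ℝ := (hM.eigenvectorUnitary : Matrix V V ℝ) with hU
  set c : V → ℝ := star U *ᵥ y with hc
  rw [mulVec_decomp hM y, dotProduct_mulVec]
  have hvm : y ᵥ* U = c := by
    rw [hc, star_eq_transpose_real, mulVec_transpose]
  rw [hvm, dotProduct]
  congr 1; funext i; ring

lemma dot_self_decomp (hM : M.IsHermitian) (y : V → ℝ) :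
    y ⬝ᵥ y = ∑ i, ((star (hM.eigenvectorUnitary : Matrix V V ℝ) *ᵥ y) i)^2 := by
  set U : Matrix V V ℝ := (hM.eigenvectorUnitary : Matrix V V ℝ) with hU
  set c : V → ℝ := star U *ᵥ y with hc
  have key : c ⬝ᵥ c = y ⬝ᵥ y := by
    nth_rewrite 2 [hc]
    rw [dotProduct_mulVec, star_eq_transpose_real, vecMul_transpose, hc,
      unit_mulVec_star_mulVec hM y]
  rw [← key, dotProduct]
  congr 1; funext i; ring

lemma maximizer_eigenvector (hM : M.IsHermitian) (y : V → ℝ) {r : ℝ}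
    (hr : ∀ i, hM.eigenvalues i ≤ r)
    (h : y ⬝ᵥ (M *ᵥ y) = r * (y ⬝ᵥ y)) : M *ᵥ y = r • y := by
  have h1 := dot_decomp hM y
  have h2 := dot_self_decomp hM y
  have hzero : ∑ i, (r - hM.eigenvalues i) *
      ((star (hM.eigenvectorUnitary : Matrix V V ℝ) *ᵥ y) i)^2 = 0 := by
    have hsplit : ∑ i, (r - hM.eigenvalues i) *
        ((star (hM.eigenvectorUnitary : Matrix V V ℝ) *ᵥ y) i)^2
        = ∑ i, r * ((star (hM.eigenvectorUnitary : Matrix V V ℝ) *ᵥ y) i)^2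
          - ∑ i, hM.eigenvalues i *
            ((star (hM.eigenvectorUnitary : Matrix V V ℝ) *ᵥ y) i)^2 := by
      rw [← Finset.sum_sub_distrib]
      congr 1; funext i; ring
    rw [hsplit, ← Finset.mul_sum, ← h2, ← h1, h]
    ring
  have hterm : ∀ i ∈ Finset.univ, (r - hM.eigenvalues i) *
      ((star (hM.eigenvectorUnitary : Matrix V V ℝ) *ᵥ y) i)^2 = 0 := by
    rw [← Finset.sum_eq_zero_iff_of_nonneg]
    · exact hzero
    · intro i _
      exact mul_nonneg (sub_nonneg.2 (hr i)) (sq_nonneg _)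
  have hDc : (fun i => hM.eigenvalues i *
      ((star (hM.eigenvectorUnitary : Matrix V V ℝ) *ᵥ y) i))
      = r • (star (hM.eigenvectorUnitary : Matrix V V ℝ) *ᵥ y) := by
    funext i
    have h0 := hterm i (Finset.mem_univ i)
    rcases mul_eq_zero.1 h0 with hz1 | hz2
    · have he : hM.eigenvalues i = r := by
        have := sub_eq_zero.1 hz1; linarith
      simp [he, mul_comm]
    · have hz : (star (hM.eigenvectorUnitary : Matrix V V ℝ) *ᵥ y) i = 0 :=
        sq_eq_zero_iff.1 hz2
      simp [hz]
  rw [mulVec_decomp hM y, hDc, mulVec_smul, unit_mulVec_star_mulVec hM y]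

omit [DecidableEq V] in
lemma quad_expand (N : Matrix V V ℝ) (v : V → ℝ) :
    v ⬝ᵥ (N *ᵥ v) = ∑ i, ∑ j, v i * N i j * v j := by
  simp only [dotProduct, mulVec, Finset.mul_sum]
  exact Finset.sum_congr rfl fun i _ => Finset.sum_congr rfl fun j _ => by ring

lemma rayleigh_le [Nonempty V] (hM : M.IsHermitian) (v : V → ℝ) :
    v ⬝ᵥ (M *ᵥ v) ≤ specRad M * (v ⬝ᵥ v) := by
  rw [dot_decomp hM v, dot_self_decomp hM v, Finset.mul_sum]
  apply Finset.sum_le_sum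
  intro i _
  have h1 : hM.eigenvalues i ≤ specRad M :=
    le_trans (le_abs_self _) ((specRad_isGreatest hM).2 ⟨i, rfl⟩)
  exact mul_le_mul_of_nonneg_right h1 (sq_nonneg _)

end Aux

/-- A proper subgraph `H` of a connected graph `G` (on the same vertex set, possibly
with isolated vertices) has strictly smaller adjacency spectral radius (the `k = 2`
case of the hypergraph statement). -/
theorem stmt_18 {V : Type*} [Fintype V] [DecidableEq V] (G H : SimpleGraph V)
    [DecidableRel G.Adj] [DecidableRel H.Adj]
    (hconn : G.Connected) (hsub : H ≤ G) (hne : H ≠ G) :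
    specRad (H.adjMatrix ℝ) < specRad (G.adjMatrix ℝ) := by
  have : Nonempty V := hconn.nonempty
  set A := G.adjMatrix ℝ with hAdef
  set B := H.adjMatrix ℝ with hBdef
  have hA : A.IsHermitian := (star_eq_transpose_real A).trans G.isSymm_adjMatrix
  have hB : B.IsHermitian := (star_eq_transpose_real B).trans H.isSymm_adjMatrix
  -- entries
  have hAnn : ∀ i j, (0:ℝ) ≤ A i j := by
    intro i j; rw [hAdef, SimpleGraph.adjMatrix_apply]; split_ifs <;> norm_num
  have hBnn : ∀ i j, (0:ℝ) ≤ B i j := by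
    intro i j; rw [hBdef, SimpleGraph.adjMatrix_apply]; split_ifs <;> norm_num
  have hBA : ∀ i j, B i j ≤ A i j := by
    intro i j
    rw [hAdef, hBdef, SimpleGraph.adjMatrix_apply, SimpleGraph.adjMatrix_apply]
    by_cases h : H.Adj i j
    · simp [h, hsub h]
    · simp [h]; split_ifs <;> norm_num
  -- an edge of G not in H
  obtain ⟨a, b, hGab, hHab⟩ : ∃ a b, G.Adj a b ∧ ¬ H.Adj a b := by
    by_contra hcon
    push_neg at hcon
    exact hne (le_antisymm hsub fun {u v} h => hcon u v h)
  -- eigenvector of B realizing its spectral radius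
  obtain ⟨iH, hiH⟩ := (specRad_isGreatest hB).1
  set x : V → ℝ := ⇑(hB.eigenvectorBasis iH) with hxdef
  have hx : B *ᵥ x = hB.eigenvalues iH • x := hB.mulVec_eigenvectorBasis iH
  have hxx : x ⬝ᵥ x = 1 := by
    have hnorm := hB.eigenvectorBasis.orthonormal.1 iH
    have h1 : x ⬝ᵥ x = (inner ℝ (hB.eigenvectorBasis iH) (hB.eigenvectorBasis iH) : ℝ) := by
      rw [PiLp.inner_apply]
      simp [dotProduct, hxdef, sq]
    rw [h1, real_inner_self_eq_norm_mul_norm, hnorm, mul_one]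
  set y : V → ℝ := fun i => |x i| with hydef
  have hy0 : ∀ i, 0 ≤ y i := fun i => abs_nonneg _
  have hyy : y ⬝ᵥ y = 1 := by
    rw [← hxx]
    simp only [dotProduct, hydef, abs_mul_abs_self]
  -- step 1 : specRad B ≤ y B y
  have hxBx : x ⬝ᵥ (B *ᵥ x) = hB.eigenvalues iH := by
    rw [hx, dotProduct_smul, hxx, smul_eq_mul, mul_one]
  have hiH' : |hB.eigenvalues iH| = specRad B := hiH
  have step1 : specRad B ≤ y ⬝ᵥ (B *ᵥ y) := by
    rw [← hiH', ← hxBx]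
    calc |x ⬝ᵥ (B *ᵥ x)| = |∑ i, ∑ j, x i * B i j * x j| := by rw [quad_expand]
      _ ≤ ∑ i, |∑ j, x i * B i j * x j| := Finset.abs_sum_le_sum_abs _ _
      _ ≤ ∑ i, ∑ j, |x i * B i j * x j| :=
          Finset.sum_le_sum fun i _ => Finset.abs_sum_le_sum_abs _ _
      _ = ∑ i, ∑ j, y i * B i j * y j := by
          refine Finset.sum_congr rfl fun i _ => Finset.sum_congr rfl fun j _ => ?_
          rw [abs_mul, abs_mul, abs_of_nonneg (hBnn i j)]
      _ = y ⬝ᵥ (B *ᵥ y) := (quad_expand _ _).symm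
  -- step 2 : y B y ≤ y A y
  have step2 : y ⬝ᵥ (B *ᵥ y) ≤ y ⬝ᵥ (A *ᵥ y) := by
    rw [quad_expand, quad_expand]
    refine Finset.sum_le_sum fun i _ => Finset.sum_le_sum fun j _ => ?_
    exact mul_le_mul_of_nonneg_right
      (mul_le_mul_of_nonneg_left (hBA i j) (hy0 i)) (hy0 j)
  -- step 3
  have step3 : y ⬝ᵥ (A *ᵥ y) ≤ specRad A := by
    have := rayleigh_le hA y
    rwa [hyy, mul_one] at this
  have hle : specRad B ≤ specRad A := le_trans step1 (le_trans step2 step3)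
  rcases lt_or_eq_of_le hle with hlt | heqr
  · exact hlt
  exfalso
  set r := specRad A with hrdef
  -- equality throughout
  have hyAy : y ⬝ᵥ (A *ᵥ y) = r :=
    le_antisymm step3 (le_trans (le_of_eq heqr.symm) (le_trans step1 step2))
  have hyBy : y ⬝ᵥ (B *ᵥ y) = r :=
    le_antisymm (le_trans step2 step3) (le_trans (le_of_eq heqr.symm) step1)
  -- y is an eigenvector of A
  have hAy : A *ᵥ y = r • y := by
    apply maximizer_eigenvector hA y
    · intro i
      exact le_trans (le_abs_self _) ((specRad_isGreatest hA).2 ⟨i, rfl⟩)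
    · rw [hyy, mul_one, hyAy]
  -- r > 0
  have hr0 : 0 ≤ r := by
    obtain ⟨i0, hi0⟩ := (specRad_isGreatest hA).1
    have h0 : |hA.eigenvalues i0| = specRad A := hi0
    rw [hrdef, ← h0]; exact abs_nonneg _
  have hrpos : 0 < r := by
    rcases lt_or_eq_of_le hr0 with h | h
    · exact h
    exfalso
    have hev0 : ∀ i, hA.eigenvalues i = 0 := by
      intro i
      have h1 : |hA.eigenvalues i| ≤ r := (specRad_isGreatest hA).2 ⟨i, rfl⟩
      rw [← h] at h1
      exact abs_eq_zero.1 (le_antisymm h1 (abs_nonneg _))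
    have hA0 : A = 0 := by
      conv_lhs => rw [hA.spectral_theorem]
      have : (diagonal (RCLike.ofReal ∘ hA.eigenvalues) : Matrix V V ℝ) = 0 := by
        rw [show RCLike.ofReal ∘ hA.eigenvalues = fun _ => (0:ℝ) by funext i; simp [hev0 i],
          diagonal_zero]
      rw [this, map_zero]
    have : A a b = 1 := by rw [hAdef]; simp [SimpleGraph.adjMatrix_apply, hGab]
    rw [hA0] at this
    simp at this
  -- positivity of y
  have hstep : ∀ i j, G.Adj i j → 0 < y i → 0 < y j := by
    intro i j hadj hyi
    have h1 : r * y j = ∑ k, A j k * y k := by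
      have := congrFun hAy j
      simp only [Pi.smul_apply, smul_eq_mul] at this
      rw [← this]
      simp [mulVec, dotProduct]
    have h2 : A j i * y i ≤ ∑ k, A j k * y k :=
      Finset.single_le_sum (f := fun k => A j k * y k)
        (fun k _ => mul_nonneg (hAnn j k) (hy0 k)) (Finset.mem_univ i)
    have h3 : A j i = 1 := by
      rw [hAdef]; simp [SimpleGraph.adjMatrix_apply, hadj.symm]
    rw [h3, one_mul] at h2
    nlinarith [hy0 j]
  have hwalkpos : ∀ {i j : V}, G.Reachable i j → 0 < y i → 0 < y j := by
    intro i j hr hi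
    obtain ⟨w⟩ := hr
    induction w with
    | nil => exact hi
    | cons h p ih => exact ih (hstep _ _ h hi)
  obtain ⟨i0, hi0⟩ : ∃ i, 0 < y i := by
    by_contra hcon
    push_neg at hcon
    have : ∀ i, y i = 0 := fun i => le_antisymm (hcon i) (hy0 i)
    rw [show y = fun _ => (0:ℝ) from funext this] at hyy
    simp [dotProduct] at hyy
  have hypos : ∀ i, 0 < y i := fun i => hwalkpos (hconn.preconnected i0 i) hi0
  -- final contradiction
  have hdiff : ∑ i, ∑ j, (y i * A i j * y j - y i * B i j * y j) = 0 := by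
    have h1 : ∑ i, ∑ j, (y i * A i j * y j - y i * B i j * y j)
        = y ⬝ᵥ (A *ᵥ y) - y ⬝ᵥ (B *ᵥ y) := by
      rw [quad_expand, quad_expand, ← Finset.sum_sub_distrib]
      exact Finset.sum_congr rfl fun i _ => Finset.sum_sub_distrib _ _
    rw [h1, hyAy, hyBy, sub_self]
  have hinnn : ∀ i j, (0:ℝ) ≤ y i * A i j * y j - y i * B i j * y j := by
    intro i j
    have h1 := mul_le_mul_of_nonneg_right
      (mul_le_mul_of_nonneg_left (hBA i j) (hy0 i)) (hy0 j)
    linarith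
  have houter : ∑ j, (y a * A a j * y j - y a * B a j * y j) = 0 := by
    have := (Finset.sum_eq_zero_iff_of_nonneg
      (fun i _ => Finset.sum_nonneg fun j _ => hinnn i j)).1 hdiff a (Finset.mem_univ a)
    exact this
  have hterm0 : y a * A a b * y b - y a * B a b * y b = 0 :=
    (Finset.sum_eq_zero_iff_of_nonneg (fun j _ => hinnn a j)).1 houter b (Finset.mem_univ b)
  have hAab : A a b = 1 := by rw [hAdef]; simp [SimpleGraph.adjMatrix_apply, hGab]
  have hBab : B a b = 0 := by rw [hBdef]; simp [SimpleGraph.adjMatrix_apply, hHab]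
  rw [hAab, hBab] at hterm0
  have := mul_pos (hypos a) (hypos b)
  nlinarith
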